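/- arXiv:2512.04479 — 3 statements merged into one kernel-verified Lean document; each statement's English description precedes it below -/
import Mathlib

section
/- (Shield's change of variables) Let λ>0 and let f:[0,1]→[0,λ] be C² with f'>0 everywhere, f(0)=0, f(1)=λ, and let h=f⁻¹:[0,λ]→[0,1]. Then for every y∈[0,λ]: h'(y)=1/f'(h(y)) and h''(y)=−f''(h(y))/f'(h(y))³; moreover ∫₀^λ W*(h'(y))dy = ∫₀¹ W(f'(x))dx and, for every ε>0, ∫₀^λ((ε²/2)h''(y)² + W*(h'(y)))dy = ∫₀¹((ε²/2)·f''(x)²/f'(x)⁵ + W(f'(x)))dx. -/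
open Set MeasureTheory Filter

noncomputable section

/-- Second derivative. -/
def d2 (f : ℝ → ℝ) : ℝ → ℝ := deriv (deriv f)

/-- Third derivative. -/
def d3 (f : ℝ → ℝ) : ℝ → ℝ := deriv (deriv (deriv f))

/-- Fourth derivative. -/
def d4 (f : ℝ → ℝ) : ℝ → ℝ := deriv (deriv (deriv (deriv f)))

/-- Surrogate for membership in the Sobolev space `H²(0,λ)` (which embeds in `C¹`):
`h` is `C¹` on `[0,λ]` and has a square-integrable second derivative. -/
def MemH2 (lam : ℝ) (h : ℝ → ℝ) : Prop :=
  ContDiffOn ℝ 1 h (Icc 0 lam) ∧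
  IntervalIntegrable (fun y => (d2 h y) ^ 2) volume 0 lam

/-- The admissible set `𝒦`. -/
def memK (lam : ℝ) (h : ℝ → ℝ) : Prop :=
  MemH2 lam h ∧ h 0 = 0 ∧ h lam = 1 ∧ ∀ y ∈ Icc (0:ℝ) lam, 0 ≤ deriv h y

/-- The transformed stored-energy density `W*(H) = H·W(1/H)` (equal to `0` at `H = 0`). -/
def Wstar (W : ℝ → ℝ) (H : ℝ) : ℝ := H * W (1 / H)

/-- Total energy `E*_ε[λ,h]`. -/
def energy (eps lam : ℝ) (Wst : ℝ → ℝ) (h : ℝ → ℝ) : ℝ :=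
  ∫ y in (0:ℝ)..lam, ((eps ^ 2 / 2) * (d2 h y) ^ 2 + Wst (deriv h y))

/-- The broken set `ℬ_h`. -/
def Bset (lam : ℝ) (h : ℝ → ℝ) : Set ℝ := {y | y ∈ Icc (0:ℝ) lam ∧ deriv h y = 0}

/-- The good set `𝒢_h`. -/
def Gset (lam : ℝ) (h : ℝ → ℝ) : Set ℝ := Icc (0:ℝ) lam \ Bset lam h

/-- A (nondegenerate) crack face of `h`. -/
def CrackFace (lam : ℝ) (h : ℝ → ℝ) (yc : ℝ) : Prop :=
  yc ∈ Icc (0:ℝ) lam ∧ deriv h yc = 0 ∧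
  ∃ α > 0,
    (Ioo (yc - α) yc ⊆ Gset lam h ∧ Ico yc (yc + α) ⊆ Bset lam h) ∨
    (Ioo yc (yc + α) ⊆ Gset lam h ∧ Ioc (yc - α) yc ⊆ Bset lam h)

/-- The Euler–Lagrange equation (EL): there is a nonnegative Radon measure `μ`
supported in the broken set such that the weak equation holds for all test
functions `ψ ∈ H²(0,λ) ∩ H¹₀(0,λ)`. -/
def EulerLagrange (eps lam : ℝ) (Sst : ℝ → ℝ) (h : ℝ → ℝ) (μ : Measure ℝ) : Prop :=
  μ ((Bset lam h)ᶜ) = 0 ∧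
  ∀ ψ : ℝ → ℝ, MemH2 lam ψ → ψ 0 = 0 → ψ lam = 0 →
    (∫ y in (0:ℝ)..lam,
        (eps ^ 2 * d2 h y * d2 ψ y + Sst (deriv h y) * deriv ψ y))
      = ∫ y in Bset lam h, deriv ψ y ∂μ

/-- The Euler–Lagrange variational inequality. -/
def ELineq (eps lam : ℝ) (Sst : ℝ → ℝ) (h : ℝ → ℝ) : Prop :=
  ∀ g : ℝ → ℝ, memK lam g →
    0 ≤ ∫ y in (0:ℝ)..lam,
      (eps ^ 2 * d2 h y * (d2 g y - d2 h y) + Sst (deriv h y) * (deriv g y - deriv h y))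

/-- The space of admissible variations `𝒱_h`. -/
def memV (lam : ℝ) (h η : ℝ → ℝ) : Prop :=
  MemH2 lam η ∧ η 0 = 0 ∧ η lam = 0 ∧
  (∀ y ∈ Bset lam h, 0 ≤ deriv η y) ∧
  ∀ yc : ℝ, CrackFace lam h yc → η yc = 0

/-- The restricted space of variations `𝒮_h`. -/
def memS (lam : ℝ) (h η : ℝ → ℝ) : Prop :=
  memV lam h η ∧ ∀ y ∈ Bset lam h, η y = 0 ∧ deriv η y = 0

/-- The second variation `δ²E*_ε[λ,h;η,η]`. -/
def secVar (eps lam : ℝ) (Mst : ℝ → ℝ) (h η : ℝ → ℝ) : ℝ :=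
  ∫ y in (0:ℝ)..lam, (eps ^ 2 * (d2 η y) ^ 2 + Mst (deriv h y) * (deriv η y) ^ 2)

/-- The `H²(0,λ)` norm (surrogate). -/
def H2norm (lam : ℝ) (η : ℝ → ℝ) : ℝ :=
  Real.sqrt (∫ y in (0:ℝ)..lam, ((η y) ^ 2 + (deriv η y) ^ 2 + (d2 η y) ^ 2))

/-- Hypotheses (H) on the stored-energy density `W`. -/
def HypW (W : ℝ → ℝ) (γ : ℝ) : Prop :=
  ContDiffOn ℝ 2 W (Ioi 0) ∧
  Tendsto W (nhdsWithin 0 (Ioi 0)) atTop ∧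
  Tendsto W atTop (nhds γ) ∧
  MonotoneOn W (Ici 1) ∧
  0 < γ ∧ W 1 = 0 ∧ ∀ F : ℝ, 0 < F → F ≠ 1 → 0 < W F


/-- Shield's change of variables: for a `C²` deformation `f` with
`f' > 0` and inverse `h`, the inverse strain and its derivative are as stated
and the transformed energies agree. -/
theorem stmt6
    (lam : ℝ) (hlam : 0 < lam)
    (W : ℝ → ℝ) (hWc : ContinuousOn W (Ioi 0))
    (f f' f'' : ℝ → ℝ)
    (hf1 : ∀ x ∈ Icc (0:ℝ) 1, HasDerivWithinAt f (f' x) (Icc 0 1) x)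
    (hf2 : ∀ x ∈ Icc (0:ℝ) 1, HasDerivWithinAt f' (f'' x) (Icc 0 1) x)
    (hf2c : ContinuousOn f'' (Icc 0 1))
    (hpos : ∀ x ∈ Icc (0:ℝ) 1, 0 < f' x)
    (hf0 : f 0 = 0) (hf1lam : f 1 = lam)
    (h : ℝ → ℝ) (hmap : MapsTo h (Icc 0 lam) (Icc 0 1))
    (hinv1 : ∀ x ∈ Icc (0:ℝ) 1, h (f x) = x)
    (hinv2 : ∀ y ∈ Icc (0:ℝ) lam, f (h y) = y) :
    (∀ y ∈ Icc (0:ℝ) lam,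
      HasDerivWithinAt h (1 / f' (h y)) (Icc 0 lam) y) ∧
    (∀ y ∈ Icc (0:ℝ) lam,
      HasDerivWithinAt (fun z => 1 / f' (h z))
        (-(f'' (h y)) / (f' (h y)) ^ 3) (Icc 0 lam) y) ∧
    (∫ y in (0:ℝ)..lam, Wstar W (1 / f' (h y)))
      = (∫ x in (0:ℝ)..1, W (f' x)) ∧
    (∀ eps : ℝ, 0 < eps →
      (∫ y in (0:ℝ)..lam,
          ((eps ^ 2 / 2) * (-(f'' (h y)) / (f' (h y)) ^ 3) ^ 2
            + Wstar W (1 / f' (h y))))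
        = ∫ x in (0:ℝ)..1,
            ((eps ^ 2 / 2) * (f'' x) ^ 2 / (f' x) ^ 5 + W (f' x))) := by
  -- basic continuity facts
  have hfc : ContinuousOn f (Icc 0 1) := fun x hx => (hf1 x hx).continuousWithinAt
  have hf'c : ContinuousOn f' (Icc 0 1) := fun x hx => (hf2 x hx).continuousWithinAt
  have h01 : (0:ℝ) ≤ 1 := zero_le_one
  -- f is strictly monotone
  have hmono : StrictMonoOn f (Icc 0 1) := by
    apply strictMonoOn_of_deriv_pos (convex_Icc 0 1) hfc
    intro x hx
    rw [interior_Icc] at hx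
    have hx' : x ∈ Icc (0:ℝ) 1 := Ioo_subset_Icc_self hx
    have hd := (hf1 x hx').hasDerivAt (Icc_mem_nhds hx.1 hx.2)
    rw [hd.deriv]; exact hpos x hx'
  have hmapf : MapsTo f (Icc 0 1) (Icc 0 lam) := by
    intro x hx
    constructor
    · rw [← hf0]
      exact hmono.monotoneOn (left_mem_Icc.2 h01) hx hx.1
    · rw [← hf1lam]
      exact hmono.monotoneOn hx (right_mem_Icc.2 h01) hx.2
  -- h is continuous on [0, lam]
  have hhc : ContinuousOn h (Icc 0 lam) := by
    let F : Icc (0:ℝ) 1 → Icc (0:ℝ) lam := fun x => ⟨f x, hmapf x.2⟩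
    let H : Icc (0:ℝ) lam → Icc (0:ℝ) 1 := fun y => ⟨h y, hmap y.2⟩
    have hHF : ∀ x, H (F x) = x := fun x => Subtype.ext (hinv1 x x.2)
    have hFH : ∀ y, F (H y) = y := fun y => Subtype.ext (hinv2 y y.2)
    let e : Icc (0:ℝ) 1 ≃ Icc (0:ℝ) lam := ⟨F, H, hHF, hFH⟩
    have hFc : Continuous (e : Icc (0:ℝ) 1 → Icc (0:ℝ) lam) :=
      Continuous.subtype_mk (continuousOn_iff_continuous_restrict.1 hfc) _
    have hHc : Continuous H := (Continuous.homeoOfEquivCompactToT2 (f := e) hFc).symm.continuous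
    rw [continuousOn_iff_continuous_restrict]
    exact continuous_subtype_val.comp hHc
  have hfpos : ∀ y ∈ Icc (0:ℝ) lam, 0 < f' (h y) := fun y hy => hpos _ (hmap hy)
  -- Claim 1
  have claim1 : ∀ y ∈ Icc (0:ℝ) lam, HasDerivWithinAt h (1 / f' (h y)) (Icc 0 lam) y := by
    intro y hy
    have hxy : h y ∈ Icc (0:ℝ) 1 := hmap hy
    have hfp : f' (h y) ≠ 0 := (hpos _ hxy).ne'
    rw [hasDerivWithinAt_iff_tendsto_slope]
    have hslopef : Tendsto (slope f (h y)) (nhdsWithin (h y) (Icc (0:ℝ) 1 \ {h y})) (nhds (f' (h y))) :=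
      hasDerivWithinAt_iff_tendsto_slope.1 (hf1 _ hxy)
    have hht : Tendsto h (nhdsWithin y (Icc (0:ℝ) lam \ {y})) (nhdsWithin (h y) (Icc (0:ℝ) 1 \ {h y})) := by
      rw [tendsto_nhdsWithin_iff]
      constructor
      · exact (hhc y hy).mono_left (nhdsWithin_mono y diff_subset)
      · filter_upwards [self_mem_nhdsWithin] with z hz
        refine ⟨hmap hz.1, ?_⟩
        intro hc
        apply hz.2
        have hfz : f (h z) = f (h y) := by rw [hc]
        rw [hinv2 z hz.1, hinv2 y hy] at hfz
        simp [hfz]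
    have hT := (hslopef.comp hht).inv₀ hfp
    rw [one_div]
    refine hT.congr' ?_
    filter_upwards [self_mem_nhdsWithin] with z hz
    have hz1 : z ∈ Icc (0:ℝ) lam := hz.1
    simp only [Function.comp_apply, slope_def_field]
    rw [show f (h z) = z from hinv2 z hz1, show f (h y) = y from hinv2 y hy, inv_div]
  -- Claim 2
  have claim2 : ∀ y ∈ Icc (0:ℝ) lam,
      HasDerivWithinAt (fun z => 1 / f' (h z)) (-(f'' (h y)) / (f' (h y)) ^ 3)
        (Icc 0 lam) y := by
    intro y hy
    have hxy : h y ∈ Icc (0:ℝ) 1 := hmap hy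
    have hfp : f' (h y) ≠ 0 := (hpos _ hxy).ne'
    have C : HasDerivWithinAt (fun z => f' (h z)) (f'' (h y) * (1 / f' (h y)))
        (Icc 0 lam) y := (hf2 _ hxy).comp y (claim1 y hy) hmap
    have D := C.inv hfp
    have heq : -(f'' (h y) * (1 / f' (h y))) / f' (h y) ^ 2 = -(f'' (h y)) / f' (h y) ^ 3 := by
      rw [mul_one_div, ← neg_div, div_div, ← pow_succ']
    rw [← heq]
    exact D.congr (fun z _ => one_div _) (one_div _)
  -- change of variables
  have subst : ∀ g : ℝ → ℝ, ContinuousOn g (Icc 0 lam) →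
      (∫ y in (0:ℝ)..lam, g y) = ∫ x in (0:ℝ)..1, f' x * g (f x) := by
    intro g hg
    have key : (∫ x in (0:ℝ)..1, f' x • (g ∘ f) x) = ∫ u in (f 0)..(f 1), g u := by
      apply intervalIntegral.integral_comp_smul_deriv''
      · rwa [uIcc_of_le h01]
      · intro x hx
        rw [min_eq_left h01, max_eq_right h01] at hx
        have hx' : x ∈ Icc (0:ℝ) 1 := Ioo_subset_Icc_self hx
        exact ((hf1 x hx').hasDerivAt (Icc_mem_nhds hx.1 hx.2)).hasDerivWithinAt
      · rwa [uIcc_of_le h01]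
      · rw [uIcc_of_le h01]
        exact hg.mono (image_subset_iff.2 hmapf)
    rw [hf0, hf1lam] at key
    rw [← key]
    simp [smul_eq_mul]
  have c1 : ContinuousOn (fun y => f' (h y)) (Icc 0 lam) := hf'c.comp hhc hmap
  have cne : ∀ y ∈ Icc (0:ℝ) lam, f' (h y) ≠ 0 := fun y hy => (hfpos y hy).ne'
  have cg : ContinuousOn (fun y => Wstar W (1 / f' (h y))) (Icc 0 lam) := by
    refine ContinuousOn.congr
      ((c1.inv₀ cne).mul (hWc.comp c1 fun y hy => hfpos y hy)) ?_
    intro y hy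
    simp [Wstar, one_div, inv_inv]
  refine ⟨claim1, claim2, ?_, ?_⟩
  · rw [subst _ cg]
    apply intervalIntegral.integral_congr
    intro x hx
    rw [uIcc_of_le h01] at hx
    have hfp : f' x ≠ 0 := (hpos x hx).ne'
    simp only [hinv1 x hx, Wstar, one_div_one_div]
    field_simp
  · intro eps heps
    have cg2 : ContinuousOn
        (fun y => (eps ^ 2 / 2) * (-(f'' (h y)) / (f' (h y)) ^ 3) ^ 2
          + Wstar W (1 / f' (h y))) (Icc 0 lam) := by
      refine ContinuousOn.add (ContinuousOn.mul continuousOn_const ?_) cg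
      exact ((hf2c.comp hhc hmap).neg.div (c1.pow 3)
        (fun y hy => pow_ne_zero 3 (cne y hy))).pow 2
    rw [subst _ cg2]
    apply intervalIntegral.integral_congr
    intro x hx
    rw [uIcc_of_le h01] at hx
    have hfp : f' x ≠ 0 := (hpos x hx).ne'
    simp only [hinv1 x hx, Wstar, one_div_one_div]
    field_simp


end
end

section
/- (Corollary 4.3) Suppose W* extends to a C² function on ℝ, (h,μ) satisfies (EL), and let G_i=(r_i,s_i), i=1,…,N, be open, disjoint, connected subsets of 𝒢_h with r_i, s_i ∈ 𝒞_h ∪ {0,λ} and ∪_{i=1}^N G_i = 𝒢_h. If for each i ∈ {1,…,N} one has δ²E*_ε[λ,h;η_i,η_i] > 0 for every nonzero η_i ∈ 𝒮_h with supp η_i ⊆ closure(G_i), then δ²E*_ε[λ,h;η,η] > 0 for every nonzero η ∈ 𝒮_h. In particular, δ²E*_ε[λ,h;η,η] ≥ Σ_{i=1}^N δ²E*_ε[λ,h;η·1_{G_i}, η·1_{G_i}] for every η ∈ 𝒮_h. -/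
open Set MeasureTheory Filter

noncomputable section

section Aux

lemma eqOn_deriv_eq {g₁ g₂ : ℝ → ℝ} {U : Set ℝ} (hU : IsOpen U)
    (hg : ∀ y ∈ U, g₁ y = g₂ y) {x : ℝ} (hx : x ∈ U) : deriv g₁ x = deriv g₂ x :=
  (Filter.eventuallyEq_of_mem (hU.mem_nhds hx) hg).deriv_eq

lemma zero_deriv_eq_zero {g : ℝ → ℝ} {U : Set ℝ} (hU : IsOpen U)
    (hg : ∀ y ∈ U, g y = 0) {x : ℝ} (hx : x ∈ U) : deriv g x = 0 := by
  have h1 : deriv g x = deriv (fun _ : ℝ => (0:ℝ)) x := eqOn_deriv_eq hU hg hx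
  rw [h1, deriv_const]

lemma zero_d2_eq_zero {g : ℝ → ℝ} {U : Set ℝ} (hU : IsOpen U)
    (hg : ∀ y ∈ U, g y = 0) {x : ℝ} (hx : x ∈ U) : d2 g x = 0 :=
  zero_deriv_eq_zero hU (fun y hy => zero_deriv_eq_zero hU hg hy) hx

lemma deriv_eq_zero_of_left {g : ℝ → ℝ} {x : ℝ} (hg : ∀ y ≤ x, g y = 0) :
    deriv g x = 0 := by
  by_cases hd : DifferentiableAt ℝ g x
  · have h1 : HasDerivWithinAt g (deriv g x) (Iic x) x := hd.hasDerivAt.hasDerivWithinAt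
    have h2 : HasDerivWithinAt g 0 (Iic x) x :=
      (hasDerivWithinAt_const x (Iic x) (0:ℝ)).congr (fun y hy => hg y hy) (hg x le_rfl)
    exact (uniqueDiffOn_Iic x x self_mem_Iic).eq_deriv _ h1 h2
  · exact deriv_zero_of_not_differentiableAt hd

lemma deriv_eq_zero_of_right {g : ℝ → ℝ} {x : ℝ} (hg : ∀ y, x ≤ y → g y = 0) :
    deriv g x = 0 := by
  by_cases hd : DifferentiableAt ℝ g x
  · have h1 : HasDerivWithinAt g (deriv g x) (Ici x) x := hd.hasDerivAt.hasDerivWithinAt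
    have h2 : HasDerivWithinAt g 0 (Ici x) x :=
      (hasDerivWithinAt_const x (Ici x) (0:ℝ)).congr (fun y hy => hg y hy) (hg x le_rfl)
    exact (uniqueDiffOn_Ici x x self_mem_Ici).eq_deriv _ h1 h2
  · exact deriv_zero_of_not_differentiableAt hd

lemma secVar_zero_fun (eps lam : ℝ) (Mst h : ℝ → ℝ) :
    secVar eps lam Mst h (fun _ => 0) = 0 := by
  have h1 : deriv (fun _ : ℝ => (0:ℝ)) = fun _ => 0 := by
    funext y; simp
  simp [secVar, d2, h1]

lemma aux_main (eps lam : ℝ) (hlam : 0 < lam) (Mst h η : ℝ → ℝ) (a b : ℝ)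
    (hab : a < b) (hG : Ioo a b ⊆ Gset lam h)
    (ha : CrackFace lam h a ∨ a = 0) (hb : CrackFace lam h b ∨ b = lam)
    (hη : memS lam h η) :
    memS lam h ((Ioo a b).indicator η) ∧
    ∀ y, y ≠ a → y ≠ b →
      eps ^ 2 * (d2 ((Ioo a b).indicator η) y) ^ 2
          + Mst (deriv h y) * (deriv ((Ioo a b).indicator η) y) ^ 2
        = (Ioo a b).indicator
            (fun z => eps ^ 2 * (d2 η z) ^ 2 + Mst (deriv h z) * (deriv η z) ^ 2) y := by
  obtain ⟨⟨⟨hC1, hInt⟩, hη0, hηlam, hηB', hηCF⟩, hηB⟩ := id hη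
  have hsubIcc : Ioo a b ⊆ Icc 0 lam := fun y hy => (hG hy).1
  have h0a : 0 ≤ a := by
    by_contra hc; push_neg at hc
    obtain ⟨t, ht1, ht2⟩ := exists_between (lt_min hab hc)
    exact absurd (hsubIcc ⟨ht1, ht2.trans_le (min_le_left _ _)⟩).1
      (not_le.2 (ht2.trans_le (min_le_right _ _)))
  have hbl : b ≤ lam := by
    by_contra hc; push_neg at hc
    obtain ⟨t, ht1, ht2⟩ := exists_between (max_lt hab hc)
    exact absurd (hsubIcc ⟨(le_max_left _ _).trans_lt ht1, ht2⟩).2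
      (not_le.2 ((le_max_right _ _).trans_lt ht1))
  have haB : CrackFace lam h a → ∃ α > 0, Ioc (a - α) a ⊆ Bset lam h := by
    rintro ⟨haI, had, α, hα, hcase | hcase⟩
    · exfalso
      obtain ⟨t, ht1, ht2⟩ := exists_between (lt_min hα (sub_pos.2 hab))
      have h1 : t < α := ht2.trans_le (min_le_left _ _)
      have h2 : t < b - a := ht2.trans_le (min_le_right _ _)
      have htG : a + t ∈ Gset lam h := hG ⟨by linarith, by linarith⟩
      have htB : a + t ∈ Bset lam h := hcase.2 ⟨by linarith, by linarith⟩
      exact htG.2 htB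
    · exact ⟨α, hα, hcase.2⟩
  have hbB : CrackFace lam h b → ∃ α > 0, Ico b (b + α) ⊆ Bset lam h := by
    rintro ⟨hbI, hbd, α, hα, hcase | hcase⟩
    · exact ⟨α, hα, hcase.2⟩
    · exfalso
      obtain ⟨t, ht1, ht2⟩ := exists_between (lt_min hα (sub_pos.2 hab))
      have h1 : t < α := ht2.trans_le (min_le_left _ _)
      have h2 : t < b - a := ht2.trans_le (min_le_right _ _)
      have htG : b - t ∈ Gset lam h := hG ⟨by linarith, by linarith⟩
      have htB : b - t ∈ Bset lam h := hcase.2 ⟨by linarith, by linarith⟩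
      exact htG.2 htB
  set χ := (Ioo a b).indicator η with hχdef
  have hχ_mem : ∀ y ∈ Ioo a b, χ y = η y := fun y hy => indicator_of_mem hy η
  have hχ_not : ∀ y, y ∉ Ioo a b → χ y = 0 := fun y hy => indicator_of_notMem hy η
  have hχ_le : ∀ y ≤ a, χ y = 0 :=
    fun y hy => hχ_not y (fun hm => absurd hm.1 (not_lt.2 hy))
  have hχ_ge : ∀ y, b ≤ y → χ y = 0 :=
    fun y hy => hχ_not y (fun hm => absurd hm.2 (not_lt.2 hy))
  obtain ⟨a', ha', hEa⟩ : ∃ a' < a, ∀ y ∈ Icc (0:ℝ) lam, a' < y → y ≤ a → η y = 0 := by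
    rcases ha with hc | rfl
    · obtain ⟨α, hα, hsub⟩ := haB hc
      exact ⟨a - α, by linarith, fun y _ h1 h2 => (hηB y (hsub ⟨h1, h2⟩)).1⟩
    · exact ⟨-1, by norm_num, fun y hy _ h2 => by
        have hy0 : y = 0 := le_antisymm h2 hy.1
        rw [hy0]; exact hη0⟩
  obtain ⟨b', hb', hEb⟩ : ∃ b', b < b' ∧ ∀ y ∈ Icc (0:ℝ) lam, y < b' → b ≤ y → η y = 0 := by
    rcases hb with hc | rfl
    · obtain ⟨α, hα, hsub⟩ := hbB hc
      exact ⟨b + α, by linarith, fun y _ h1 h2 => (hηB y (hsub ⟨h2, h1⟩)).1⟩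
    · exact ⟨b + 1, by linarith, fun y hy _ h2 => by
        have hyb : y = b := le_antisymm hy.2 h2
        rw [hyb]; exact hηlam⟩
  have hEq : ∀ y ∈ Icc (0:ℝ) lam, a' < y → y < b' → χ y = η y := by
    intro y hy h1 h2
    rcases le_or_gt y a with hya | hya
    · rw [hχ_le y hya, hEa y hy h1 hya]
    · rcases lt_or_ge y b with hyb | hyb
      · exact hχ_mem y ⟨hya, hyb⟩
      · rw [hχ_ge y hyb, hEb y hy h2 hyb]
  have hCD : ContDiffOn ℝ 1 χ (Icc 0 lam) := by
    intro y hy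
    rcases le_or_gt y b with hyb | hyb
    · rcases le_or_gt a y with hya | hya
      · have hmem : Icc (0:ℝ) lam ∩ Ioo a' b' ∈ nhdsWithin y (Icc (0:ℝ) lam) :=
          inter_mem self_mem_nhdsWithin
            (mem_nhdsWithin_of_mem_nhds
              (Ioo_mem_nhds (lt_of_lt_of_le ha' hya) (lt_of_le_of_lt hyb hb')))
        refine (hC1 y hy).congr_of_eventuallyEq ?_ ?_
        · exact Filter.eventuallyEq_of_mem hmem fun z hz => hEq z hz.1 hz.2.1 hz.2.2
        · exact hEq y hy (lt_of_lt_of_le ha' hya) (lt_of_le_of_lt hyb hb')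
      · refine (contDiffWithinAt_const (c := (0:ℝ))).congr_of_eventuallyEq ?_ (hχ_le y hya.le)
        exact Filter.eventuallyEq_of_mem
          (mem_nhdsWithin_of_mem_nhds (Iio_mem_nhds hya)) fun z hz => hχ_le z (le_of_lt hz)
    · refine (contDiffWithinAt_const (c := (0:ℝ))).congr_of_eventuallyEq ?_ (hχ_ge y hyb.le)
      exact Filter.eventuallyEq_of_mem
        (mem_nhdsWithin_of_mem_nhds (Ioi_mem_nhds hyb)) fun z hz => hχ_ge z (le_of_lt hz)
  have hDIoo : ∀ y ∈ Ioo a b, deriv χ y = deriv η y :=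
    fun y hy => eqOn_deriv_eq isOpen_Ioo hχ_mem hy
  have hD2Ioo : ∀ y ∈ Ioo a b, d2 χ y = d2 η y := by
    intro y hy
    exact eqOn_deriv_eq isOpen_Ioo hDIoo hy
  have hOut : ∀ y, y ∉ Icc a b → deriv χ y = 0 ∧ d2 χ y = 0 := by
    intro y hy
    have hopen : IsOpen (Icc a b)ᶜ := isClosed_Icc.isOpen_compl
    have hz : ∀ z ∈ (Icc a b)ᶜ, χ z = 0 :=
      fun z hzc => hχ_not z fun hm => hzc (Ioo_subset_Icc_self hm)
    exact ⟨zero_deriv_eq_zero hopen hz hy, zero_d2_eq_zero hopen hz hy⟩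
  have hDa : deriv χ a = 0 := by
    rcases ha with hc | rfl
    · obtain ⟨α, hα, hsub⟩ := haB hc
      have heq : ∀ z ∈ Ioo (a - α) b, χ z = η z := by
        intro z hz
        rcases le_or_gt z a with h1 | h1
        · rw [hχ_le z h1, (hηB z (hsub ⟨hz.1, h1⟩)).1]
        · exact hχ_mem z ⟨h1, hz.2⟩
      have h3 : deriv χ a = deriv η a := eqOn_deriv_eq isOpen_Ioo heq ⟨by linarith, hab⟩
      rw [h3]
      exact (hηB a ⟨hc.1, hc.2.1⟩).2
    · exact deriv_eq_zero_of_left hχ_le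
  have hDb : deriv χ b = 0 := by
    rcases hb with hc | rfl
    · obtain ⟨α, hα, hsub⟩ := hbB hc
      have heq : ∀ z ∈ Ioo a (b + α), χ z = η z := by
        intro z hz
        rcases lt_or_ge z b with h1 | h1
        · exact hχ_mem z ⟨hz.1, h1⟩
        · rw [hχ_ge z h1, (hηB z (hsub ⟨h1, hz.2⟩)).1]
      have h3 : deriv χ b = deriv η b := eqOn_deriv_eq isOpen_Ioo heq ⟨hab, by linarith⟩
      rw [h3]
      exact (hηB b ⟨hc.1, hc.2.1⟩).2
    · exact deriv_eq_zero_of_right hχ_ge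
  have hχB : ∀ y ∈ Bset lam h, χ y = 0 ∧ deriv χ y = 0 := by
    intro y hyB
    have hyIoo : y ∉ Ioo a b := fun hm => (hG hm).2 hyB
    refine ⟨hχ_not y hyIoo, ?_⟩
    rcases lt_trichotomy y a with h1 | h1 | h1
    · exact (hOut y (fun hm => absurd hm.1 (not_le.2 h1))).1
    · rw [h1]; exact hDa
    · rcases lt_trichotomy y b with h2 | h2 | h2
      · exact absurd ⟨h1, h2⟩ hyIoo
      · rw [h2]; exact hDb
      · exact (hOut y (fun hm => absurd hm.2 (not_le.2 h2))).1
  have hkey : ∀ y, y ≠ a → y ≠ b →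
      (y ∈ Ioo a b ∧ deriv χ y = deriv η y ∧ d2 χ y = d2 η y) ∨
      (y ∉ Ioo a b ∧ deriv χ y = 0 ∧ d2 χ y = 0) := by
    intro y hya hyb
    by_cases hm : y ∈ Ioo a b
    · exact Or.inl ⟨hm, hDIoo y hm, hD2Ioo y hm⟩
    · have hyc : y ∉ Icc a b := by
        intro hIcc
        rcases eq_or_lt_of_le hIcc.1 with h | h
        · exact hya h.symm
        rcases eq_or_lt_of_le hIcc.2 with h' | h'
        · exact hyb h'
        exact hm ⟨h, h'⟩
      exact Or.inr ⟨hm, (hOut y hyc).1, (hOut y hyc).2⟩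
  have hIntχ : IntervalIntegrable (fun y => (d2 χ y) ^ 2) volume 0 lam := by
    rw [intervalIntegrable_iff, uIoc_of_le hlam.le] at hInt ⊢
    have hind : IntegrableOn ((Ioo a b).indicator fun y => (d2 η y) ^ 2) (Ioc 0 lam) volume :=
      hInt.indicator measurableSet_Ioo
    refine hind.congr ?_
    have hnull : volume ({a, b} : Set ℝ) = 0 :=
      (((Set.finite_singleton b).insert a).countable).measure_zero volume
    refine ae_restrict_of_ae ?_
    have hae : ∀ᵐ y ∂(volume : Measure ℝ),
        ((Ioo a b).indicator fun y => (d2 η y) ^ 2) y = (d2 χ y) ^ 2 := by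
      rw [ae_iff]
      refine measure_mono_null ?_ hnull
      intro y hy
      simp only [Set.mem_setOf_eq] at hy
      by_contra hmem
      simp only [Set.mem_insert_iff, Set.mem_singleton_iff, not_or] at hmem
      apply hy
      rcases hkey y hmem.1 hmem.2 with ⟨hm, _, h2⟩ | ⟨hm, _, h2⟩
      · rw [indicator_of_mem hm, h2]
      · rw [indicator_of_notMem hm, h2]; norm_num
    exact hae
  have hχ0 : χ 0 = 0 := hχ_le 0 h0a
  have hχlam : χ lam = 0 := hχ_ge lam hbl
  refine ⟨⟨⟨⟨hCD, hIntχ⟩, hχ0, hχlam, fun y hy => ((hχB y hy).2).ge,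
      fun yc hyc => (hχB yc ⟨hyc.1, hyc.2.1⟩).1⟩, hχB⟩, ?_⟩
  intro y hya hyb
  rcases hkey y hya hyb with ⟨hm, h1, h2⟩ | ⟨hm, h1, h2⟩
  · rw [h1, h2, indicator_of_mem hm]
  · rw [h1, h2, indicator_of_notMem hm]; ring

end Aux

/-- Corollary 4.3: if each unbroken part `G_i` is independently
stable (positive second variation for nonzero variations in `𝒮_h` supported in
`closure G_i`), then the second variation is positive on all nonzero
`η ∈ 𝒮_h`; moreover the second variation dominates the sum of the second
variations of the restrictions `η·1_{G_i}`. -/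
theorem stmt11
    (eps lam : ℝ) (heps : 0 < eps) (hlam : 0 < lam)
    (Wst Sst Mst : ℝ → ℝ) (hW : ContDiff ℝ 2 Wst)
    (hS : ∀ H : ℝ, HasDerivAt Wst (Sst H) H)
    (hM : ∀ H : ℝ, HasDerivAt Sst (Mst H) H)
    (h : ℝ → ℝ) (hh : memK lam h)
    (μ : Measure ℝ) (hEL : EulerLagrange eps lam Sst h μ)
    (N : ℕ) (r s : Fin N → ℝ)
    (hGsub : ∀ i, Ioo (r i) (s i) ⊆ Gset lam h)
    (hGne : ∀ i, r i < s i)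
    (hGdisj : ∀ i j, i ≠ j → Disjoint (Ioo (r i) (s i)) (Ioo (r j) (s j)))
    (hends : ∀ i, (CrackFace lam h (r i) ∨ r i = 0 ∨ r i = lam) ∧
                  (CrackFace lam h (s i) ∨ s i = 0 ∨ s i = lam))
    (hcover : (⋃ i, Ioo (r i) (s i)) = Gset lam h)
    (hstab : ∀ i, ∀ η : ℝ → ℝ, memS lam h η →
      Function.support η ⊆ Icc (r i) (s i) →
      (∃ y ∈ Icc (0:ℝ) lam, η y ≠ 0) →
      0 < secVar eps lam Mst h η) :
    (∀ η : ℝ → ℝ, memS lam h η → (∃ y ∈ Icc (0:ℝ) lam, η y ≠ 0) →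
      0 < secVar eps lam Mst h η) ∧
    (∀ η : ℝ → ℝ, memS lam h η →
      (∑ i, secVar eps lam Mst h ((Ioo (r i) (s i)).indicator η))
        ≤ secVar eps lam Mst h η) := by
  -- continuity of Mst
  have hSst : Sst = deriv Wst := funext fun H => ((hS H).deriv).symm
  have hMstc : Continuous Mst := by
    have hM' : Mst = deriv Sst := funext fun H => ((hM H).deriv).symm
    have hW' : ContDiff ℝ (1 + 1) Wst := by
      rwa [show ((1:WithTop ℕ∞) + 1) = 2 by norm_num]
    have h1 : ContDiff ℝ 1 (deriv Wst) := (contDiff_succ_iff_deriv.mp hW').2.2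
    have h2 : Continuous (deriv (deriv Wst)) := (contDiff_one_iff_deriv.mp h1).2
    rw [hM', hSst]
    exact h2
  -- basic endpoint facts
  have hsle : ∀ i, s i ≤ lam := by
    intro i; by_contra hc; push_neg at hc
    obtain ⟨t, ht1, ht2⟩ := exists_between (max_lt (hGne i) hc)
    exact absurd ((hGsub i ⟨(le_max_left _ _).trans_lt ht1, ht2⟩).1).2
      (not_le.2 ((le_max_right _ _).trans_lt ht1))
  have hrge : ∀ i, 0 ≤ r i := by
    intro i; by_contra hc; push_neg at hc
    obtain ⟨t, ht1, ht2⟩ := exists_between (lt_min (hGne i) hc)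
    exact absurd ((hGsub i ⟨ht1, ht2.trans_le (min_le_left _ _)⟩).1).1
      (not_le.2 (ht2.trans_le (min_le_right _ _)))
  have hra : ∀ i, CrackFace lam h (r i) ∨ r i = 0 := by
    intro i
    rcases (hends i).1 with hc | h0 | hl
    · exact Or.inl hc
    · exact Or.inr h0
    · exfalso
      have hlt := (hGne i).trans_le (hsle i)
      rw [hl] at hlt
      exact lt_irrefl _ hlt
  have hsb : ∀ i, CrackFace lam h (s i) ∨ s i = lam := by
    intro i
    rcases (hends i).2 with hc | h0 | hl
    · exact Or.inl hc
    · exfalso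
      have hlt := (hrge i).trans_lt (hGne i)
      rw [h0] at hlt
      exact lt_irrefl _ hlt
    · exact Or.inr hl
  have haux : ∀ (η : ℝ → ℝ), memS lam h η → ∀ i : Fin N,
      memS lam h ((Ioo (r i) (s i)).indicator η) ∧
      ∀ y, y ≠ r i → y ≠ s i →
        eps ^ 2 * (d2 ((Ioo (r i) (s i)).indicator η) y) ^ 2
            + Mst (deriv h y) * (deriv ((Ioo (r i) (s i)).indicator η) y) ^ 2
          = (Ioo (r i) (s i)).indicator
              (fun z => eps ^ 2 * (d2 η z) ^ 2 + Mst (deriv h z) * (deriv η z) ^ 2) y :=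
    fun η hη i => aux_main eps lam hlam Mst h η (r i) (s i) (hGne i) (hGsub i)
      (hra i) (hsb i) hη
  have hIooIoc : ∀ i : Fin N, Ioo (r i) (s i) ⊆ Ioc 0 lam :=
    fun i y hy => ⟨(hrge i).trans_lt hy.1, le_of_lt (lt_of_lt_of_le hy.2 (hsle i))⟩
  have hmeas : ∀ i : Fin N, MeasurableSet (Ioo (r i) (s i)) := fun i => measurableSet_Ioo
  have hmeasU : MeasurableSet (⋃ i, Ioo (r i) (s i)) := MeasurableSet.iUnion hmeas
  have hdisj : Pairwise (Function.onFun Disjoint fun i => Ioo (r i) (s i)) :=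
    fun i j hij => hGdisj i j hij
  -- the key inequality (part 2)
  have key : ∀ η : ℝ → ℝ, memS lam h η →
      (∑ i, secVar eps lam Mst h ((Ioo (r i) (s i)).indicator η))
        ≤ secVar eps lam Mst h η := by
    intro η hη
    obtain ⟨⟨⟨hC1, hInt⟩, hη0, hηlam, hηB', hηCF⟩, hηB⟩ := id hη
    set f : ℝ → ℝ := fun y => eps ^ 2 * (d2 η y) ^ 2 + Mst (deriv h y) * (deriv η y) ^ 2
      with hfdef
    have hg1 : IntegrableOn (fun y => eps ^ 2 * (d2 η y) ^ 2) (Ioc 0 lam) volume := by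
      have h1 := hInt.const_mul (eps ^ 2)
      rwa [intervalIntegrable_iff, uIoc_of_le hlam.le] at h1
    have hcont : ContinuousOn
        (fun y => Mst (derivWithin h (Icc 0 lam) y) * (derivWithin η (Icc 0 lam) y) ^ 2)
        (Icc 0 lam) := by
      have hch : ContinuousOn (derivWithin h (Icc 0 lam)) (Icc 0 lam) :=
        hh.1.1.continuousOn_derivWithin (uniqueDiffOn_Icc hlam) le_rfl
      have chη : ContinuousOn (derivWithin η (Icc 0 lam)) (Icc 0 lam) :=
        hC1.continuousOn_derivWithin (uniqueDiffOn_Icc hlam) le_rfl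
      exact (hMstc.comp_continuousOn hch).mul (chη.pow 2)
    have hg2 : IntegrableOn (fun y => Mst (deriv h y) * (deriv η y) ^ 2) (Ioc 0 lam)
        volume := by
      rw [integrableOn_Ioc_iff_integrableOn_Ioo]
      refine ((hcont.integrableOn_Icc).mono_set Ioo_subset_Icc_self).congr_fun ?_
        measurableSet_Ioo
      intro y hy
      have hnh : Icc (0:ℝ) lam ∈ nhds y := Icc_mem_nhds hy.1 hy.2
      simp only [derivWithin_of_mem_nhds hnh]
    have hintf : IntegrableOn f (Ioc 0 lam) volume := hg1.add hg2
    have hae : ∀ i : Fin N, (fun y => eps ^ 2 * (d2 ((Ioo (r i) (s i)).indicator η) y) ^ 2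
        + Mst (deriv h y) * (deriv ((Ioo (r i) (s i)).indicator η) y) ^ 2)
        =ᵐ[volume] (Ioo (r i) (s i)).indicator f := by
      intro i
      have hnull : volume ({r i, s i} : Set ℝ) = 0 :=
        (((Set.finite_singleton (s i)).insert (r i)).countable).measure_zero volume
      have hcompl : ({r i, s i} : Set ℝ)ᶜ ∈ ae (volume : Measure ℝ) :=
        compl_mem_ae_iff.mpr hnull
      refine Filter.eventuallyEq_of_mem hcompl ?_
      intro y hy
      simp only [Set.mem_compl_iff, Set.mem_insert_iff, Set.mem_singleton_iff, not_or] at hy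
      exact (haux η hη i).2 y hy.1 hy.2
    have hcomp : ∀ i : Fin N, secVar eps lam Mst h ((Ioo (r i) (s i)).indicator η)
        = ∫ y in Ioo (r i) (s i), f y := by
      intro i
      rw [secVar, intervalIntegral.integral_of_le hlam.le,
        integral_congr_ae (ae_restrict_of_ae (hae i)),
        setIntegral_indicator measurableSet_Ioo,
        inter_eq_self_of_subset_right (hIooIoc i)]
    have hsum : ∑ i, secVar eps lam Mst h ((Ioo (r i) (s i)).indicator η)
        = ∫ y in ⋃ i, Ioo (r i) (s i), f y := by
      rw [integral_iUnion_fintype hmeas hdisj (fun i => hintf.mono_set (hIooIoc i))]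
      exact Finset.sum_congr rfl fun i _ => hcomp i
    have hcov : (⋃ i, Ioo (r i) (s i)) ⊆ Ioc 0 lam := iUnion_subset hIooIoc
    have hdiffpos : 0 ≤ ∫ y in Ioc 0 lam \ ⋃ i, Ioo (r i) (s i), f y := by
      refine setIntegral_nonneg (measurableSet_Ioc.diff hmeasU) ?_
      intro y hy
      have hyB : y ∈ Bset lam h := by
        have hyIcc : y ∈ Icc (0:ℝ) lam := Ioc_subset_Icc_self hy.1
        by_contra hB
        have hyG : y ∈ Gset lam h := ⟨hyIcc, hB⟩
        rw [← hcover] at hyG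
        exact hy.2 hyG
      have hd0 : deriv η y = 0 := (hηB y hyB).2
      simp only [hfdef, hd0]
      rw [show ((0:ℝ)) ^ 2 = 0 by norm_num, mul_zero, add_zero]
      positivity
    have hsplit : ∫ y in Ioc 0 lam \ ⋃ i, Ioo (r i) (s i), f y
        = (∫ y in Ioc 0 lam, f y) - ∫ y in ⋃ i, Ioo (r i) (s i), f y :=
      integral_diff hmeasU hintf hcov
    have hfinal : (∫ y in ⋃ i, Ioo (r i) (s i), f y) ≤ ∫ y in Ioc 0 lam, f y := by
      linarith [hdiffpos, hsplit]
    calc ∑ i, secVar eps lam Mst h ((Ioo (r i) (s i)).indicator η)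
        = ∫ y in ⋃ i, Ioo (r i) (s i), f y := hsum
      _ ≤ ∫ y in Ioc 0 lam, f y := hfinal
      _ = secVar eps lam Mst h η := by
          rw [secVar, intervalIntegral.integral_of_le hlam.le]
  refine ⟨?_, key⟩
  intro η hη hex
  obtain ⟨y₀, hy₀, hy₀ne⟩ := hex
  have hηB := hη.2
  have hy₀G : y₀ ∈ ⋃ i, Ioo (r i) (s i) := by
    rw [hcover]
    exact ⟨hy₀, fun hB => hy₀ne (hηB y₀ hB).1⟩
  obtain ⟨i₀, hi₀⟩ := mem_iUnion.mp hy₀G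
  have hnn : ∀ i : Fin N, 0 ≤ secVar eps lam Mst h ((Ioo (r i) (s i)).indicator η) := by
    intro i
    by_cases hex' : ∃ y ∈ Ioo (r i) (s i), η y ≠ 0
    · obtain ⟨y, hy, hyne⟩ := hex'
      refine le_of_lt (hstab i _ (haux η hη i).1
        (Set.support_indicator_subset.trans Ioo_subset_Icc_self)
        ⟨y, (hGsub i hy).1, ?_⟩)
      rw [indicator_of_mem hy]; exact hyne
    · push_neg at hex'
      have hzero : (Ioo (r i) (s i)).indicator η = fun _ => (0:ℝ) := by
        funext y
        by_cases hm : y ∈ Ioo (r i) (s i)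
        · rw [indicator_of_mem hm]; exact hex' y hm
        · exact indicator_of_notMem hm η
      rw [hzero, secVar_zero_fun]
  have hpos : 0 < secVar eps lam Mst h ((Ioo (r i₀) (s i₀)).indicator η) :=
    hstab i₀ _ (haux η hη i₀).1
      (Set.support_indicator_subset.trans Ioo_subset_Icc_self)
      ⟨y₀, (hGsub i₀ hi₀).1, by rw [indicator_of_mem hi₀]; exact hy₀ne⟩
  have hsumpos : 0 < ∑ i, secVar eps lam Mst h ((Ioo (r i) (s i)).indicator η) :=
    Finset.sum_pos' (fun i _ => hnn i) ⟨i₀, Finset.mem_univ _, hpos⟩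
  exact hsumpos.trans_le (key η hη)

end
end

section
/- (Double-well structure of the transformed energy) If W satisfies hypotheses (H), then the transformed density W*(H) = H·W(1/H) satisfies: W*(1) = 0; W*(H) > 0 for every H ∈ (0,∞) with H ≠ 1; lim_{H→0⁺} W*(H) = 0, so that setting W*(0) := 0 makes W* continuous on [0,∞) with zeros (wells) exactly at H = 0 and H = 1; and lim_{H→∞} W*(H) = ∞. -/
open Set MeasureTheory Filter

noncomputable section

/-- double-well structure of the transformed energy: under
hypotheses (H), `W*(1) = 0`, `W* > 0` on `(0,∞)∖{1}`, `W*(H) → 0` as `H → 0⁺`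
(so the extension by `W*(0) = 0` is continuous on `[0,∞)` with wells exactly at
`0` and `1`), and `W*(H) → ∞` as `H → ∞`. -/
theorem stmt18 (γ : ℝ) (W : ℝ → ℝ) (hW : HypW W γ) :
    Wstar W 1 = 0 ∧
    (∀ H : ℝ, 0 < H → H ≠ 1 → 0 < Wstar W H) ∧
    Tendsto (Wstar W) (nhdsWithin 0 (Ioi 0)) (nhds 0) ∧
    Wstar W 0 = 0 ∧
    ContinuousOn (Wstar W) (Ici 0) ∧
    (∀ H ∈ Ici (0:ℝ), (Wstar W H = 0 ↔ H = 0 ∨ H = 1)) ∧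
    Tendsto (Wstar W) atTop atTop := by
  obtain ⟨hC2, h0top, hγtop, hmono, hγpos, hW1, hWpos⟩ := hW
  have hpos : ∀ H : ℝ, 0 < H → H ≠ 1 → 0 < Wstar W H := by
    intro H hH hH1
    have h1H : (0:ℝ) < 1 / H := by positivity
    have h1H1 : 1 / H ≠ 1 := by
      intro h; apply hH1; field_simp at h; exact h.symm
    exact mul_pos hH (hWpos _ h1H h1H1)
  have hto0 : Tendsto (Wstar W) (nhdsWithin 0 (Ioi 0)) (nhds 0) := by
    have hinv : Tendsto (fun H : ℝ => 1 / H) (nhdsWithin 0 (Ioi 0)) atTop := by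
      simpa [one_div] using tendsto_inv_nhdsGT_zero
    have hWc : Tendsto (fun H : ℝ => W (1 / H)) (nhdsWithin 0 (Ioi 0)) (nhds γ) :=
      hγtop.comp hinv
    have hid : Tendsto (fun H : ℝ => H) (nhdsWithin 0 (Ioi 0)) (nhds 0) :=
      tendsto_id.mono_left nhdsWithin_le_nhds
    have key : Tendsto (fun H : ℝ => H * W (1 / H)) (nhdsWithin 0 (Ioi 0)) (nhds 0) := by
      simpa using hid.mul hWc
    exact key
  have hcont : ContinuousOn (Wstar W) (Ici 0) := by
    have hWcont : ContinuousOn W (Ioi 0) := hC2.continuousOn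
    intro H hH
    rcases eq_or_lt_of_le (mem_Ici.mp hH) with h0 | h0
    · -- H = 0
      subst h0
      unfold ContinuousWithinAt
      rw [show Wstar W 0 = 0 by simp [Wstar]]
      rw [show Ici (0:ℝ) = insert 0 (Ioi 0) by
        ext x; simp [le_iff_lt_or_eq, or_comm, eq_comm]]
      rw [nhdsWithin_insert]
      refine Tendsto.sup ?_ hto0
      simpa [show Wstar W 0 = 0 by simp [Wstar]] using tendsto_pure_nhds (Wstar W) 0
    · -- H > 0
      have hc : ContinuousAt (Wstar W) H := by
        have hWat : ContinuousAt W (1 / H) :=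
          hWcont.continuousAt (Ioi_mem_nhds (show (0:ℝ) < 1 / H by positivity))
        have h1 : ContinuousAt (fun H : ℝ => W (1 / H)) H :=
          hWat.comp (continuousAt_const.div continuousAt_id (ne_of_gt h0))
        exact continuousAt_id.mul h1
      exact hc.continuousWithinAt
  have hW1' : Wstar W 1 = 0 := by simp [Wstar, hW1]
  refine ⟨hW1', hpos, hto0, by simp [Wstar], hcont, ?_, ?_⟩
  · intro H hH
    constructor
    · intro h
      by_contra hc
      push_neg at hc
      obtain ⟨h0, h1⟩ := hc
      have hHpos : 0 < H := lt_of_le_of_ne (mem_Ici.mp hH) (Ne.symm h0)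
      exact absurd h (ne_of_gt (hpos H hHpos h1))
    · rintro (rfl | rfl)
      · simp [Wstar]
      · exact hW1'
  · -- tendsto atTop
    have hinv : Tendsto (fun H : ℝ => 1 / H) atTop (nhdsWithin 0 (Ioi 0)) := by
      rw [tendsto_nhdsWithin_iff]
      constructor
      · simpa [one_div] using tendsto_inv_atTop_zero
      · filter_upwards [eventually_gt_atTop (0:ℝ)] with H hH
        exact mem_Ioi.mpr (by positivity)
    have hWtop : Tendsto (fun H : ℝ => W (1 / H)) atTop atTop := h0top.comp hinv
    have key : Tendsto (fun H : ℝ => H * W (1 / H)) atTop atTop :=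
      Filter.tendsto_id.atTop_mul_atTop₀ hWtop
    exact key


end
end
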